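/- Let C ⊆ F_2^n be a local identifying code. The code C' = F_2 ⊕ C = {(a,c) : a ∈ {0,1}, c ∈ C} ⊆ F_2^{n+1} is a local identifying code if and only if |I_C(c)| ≥ 2 for every c ∈ C. -/

import Mathlib

open SimpleGraph

/-- The closed neighbourhood of a vertex. -/
def cnbr {V : Type*} (G : SimpleGraph V) (u : V) : Set V := insert u (G.neighborSet u)

/-- The `I`-set of a vertex with respect to a code `C`. -/
def iset {V : Type*} (G : SimpleGraph V) (C : Set V) (u : V) : Set V := cnbr G u ∩ C

/-- `C` is a dominating set (covering code). -/
def IsDominating {V : Type*} (G : SimpleGraph V) (C : Set V) : Prop :=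
  ∀ u, (iset G C u).Nonempty

/-- `C` is a local identifying code. -/
def IsLocalID {V : Type*} (G : SimpleGraph V) (C : Set V) : Prop :=
  IsDominating G C ∧ ∀ u v, G.Adj u v → iset G C u ≠ iset G C v

/-- `C` is a local locating-dominating code. -/
def IsLocalLD {V : Type*} (G : SimpleGraph V) (C : Set V) : Prop :=
  IsDominating G C ∧ ∀ u v, G.Adj u v → u ∉ C → v ∉ C → iset G C u ≠ iset G C v

/-- `C` is an identifying code. -/
def IsID {V : Type*} (G : SimpleGraph V) (C : Set V) : Prop :=
  IsDominating G C ∧ ∀ u v : V, u ≠ v → iset G C u ≠ iset G C v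

/-- `C` is a locating-dominating code. -/
def IsLD {V : Type*} (G : SimpleGraph V) (C : Set V) : Prop :=
  IsDominating G C ∧ ∀ u v : V, u ≠ v → u ∉ C → v ∉ C → iset G C u ≠ iset G C v

/-- The share of a codeword `c`. -/
noncomputable def share {V : Type*} (G : SimpleGraph V) (C : Set V) (c : V) : ℝ :=
  ∑ᶠ u ∈ cnbr G c, (1 : ℝ) / (iset G C u).ncard

/-- The binary `n`-dimensional hypercube. -/
def cube (n : ℕ) : SimpleGraph (Fin n → ZMod 2) where
  Adj x y := hammingDist x y = 1
  symm := ⟨fun x y (h : hammingDist x y = 1) => show hammingDist y x = 1 by rwa [hammingDist_comm]⟩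
  loopless := ⟨fun x (h : hammingDist x x = 1) => by simp only [hammingDist_self] at h; exact absurd h (by norm_num)⟩


lemma hamming_succ {n : ℕ} (x y : Fin (n+1) → ZMod 2) :
    hammingDist x y = (if x 0 = y 0 then 0 else 1) + hammingDist (Fin.tail x) (Fin.tail y) := by
  simp only [hammingDist, Finset.card_filter, Fin.sum_univ_succ]
  congr 1
  by_cases h : x 0 = y 0 <;> simp [h]

lemma cube_adj_succ {n : ℕ} (x y : Fin (n+1) → ZMod 2) :
    (cube (n+1)).Adj x y ↔
      (x 0 ≠ y 0 ∧ Fin.tail x = Fin.tail y) ∨ (x 0 = y 0 ∧ (cube n).Adj (Fin.tail x) (Fin.tail y)) := by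
  show hammingDist x y = 1 ↔ _
  rw [hamming_succ]
  by_cases h : x 0 = y 0
  · rw [if_pos h, zero_add]
    constructor
    · intro h1; exact Or.inr ⟨h, h1⟩
    · rintro (⟨h2, _⟩ | ⟨_, h2⟩)
      · exact absurd h h2
      · exact h2
  · simp only [if_neg h]
    constructor
    · intro h1
      have : hammingDist (Fin.tail x) (Fin.tail y) = 0 := by omega
      exact Or.inl ⟨h, by rwa [hammingDist_eq_zero] at this⟩
    · rintro (⟨_, h2⟩ | ⟨h2, _⟩)
      · rw [h2, hammingDist_self]
      · exact absurd h2 h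

lemma mem_iset {V : Type*} (G : SimpleGraph V) (C : Set V) (u y : V) :
    y ∈ iset G C u ↔ (y = u ∨ G.Adj u y) ∧ y ∈ C := by
  simp [iset, cnbr]

lemma mem_iset' {n : ℕ} (C : Set (Fin n → ZMod 2)) (x y : Fin (n+1) → ZMod 2) :
    y ∈ iset (cube (n+1)) (Fin.tail ⁻¹' C) x ↔
      (Fin.tail y = Fin.tail x ∨ (y 0 = x 0 ∧ (cube n).Adj (Fin.tail x) (Fin.tail y)))
        ∧ Fin.tail y ∈ C := by
  rw [mem_iset]
  rw [cube_adj_succ]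
  simp only [Set.mem_preimage]
  constructor
  · rintro ⟨h1 | ⟨h2, h3⟩ | ⟨h2, h3⟩, hc⟩
    · exact ⟨Or.inl (by rw [h1]), hc⟩
    · exact ⟨Or.inl h3.symm, hc⟩
    · exact ⟨Or.inr ⟨h2.symm, h3⟩, hc⟩
  · rintro ⟨h1 | ⟨h2, h3⟩, hc⟩
    · by_cases h0 : y 0 = x 0
      · refine ⟨Or.inl ?_, hc⟩
        rw [← Fin.cons_self_tail y, ← Fin.cons_self_tail x, h0, h1]
      · exact ⟨Or.inr (Or.inl ⟨fun he => h0 he.symm, h1.symm⟩), hc⟩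
    · exact ⟨Or.inr (Or.inr ⟨h2.symm, h3⟩), hc⟩

lemma cons_mem_iset' {n : ℕ} (C : Set (Fin n → ZMod 2)) (x : Fin (n+1) → ZMod 2)
    (t : Fin n → ZMod 2) :
    Fin.cons (x 0) t ∈ iset (cube (n+1)) (Fin.tail ⁻¹' C) x ↔ t ∈ iset (cube n) C (Fin.tail x) := by
  rw [mem_iset', mem_iset]
  simp [Fin.tail_cons]

/-- For a local identifying code `C ⊆ F_2^n`, the direct sum `F_2 ⊕ C ⊆ F_2^{n+1}`
is a local identifying code iff `|I_C(c)| ≥ 2` for every `c ∈ C`. -/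
theorem stmt9 (n : ℕ) (C : Set (Fin n → ZMod 2)) (hC : IsLocalID (cube n) C) :
    IsLocalID (cube (n + 1)) (Fin.tail ⁻¹' C) ↔ ∀ c ∈ C, 2 ≤ (iset (cube n) C c).ncard := by
  constructor
  · rintro ⟨_, hdiff⟩ c hc
    have hadj : (cube (n+1)).Adj (Fin.cons 0 c) (Fin.cons 1 c) := by
      rw [cube_adj_succ]
      exact Or.inl ⟨by simp, by simp [Fin.tail_cons]⟩
    have hne := hdiff _ _ hadj
    by_contra hlt
    push_neg at hlt
    have hnod : ∀ d, (cube n).Adj c d → d ∉ C := by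
      intro d hd hdC
      have h1 : 1 < (iset (cube n) C c).ncard :=
        (Set.one_lt_ncard_iff (Set.toFinite _)).2 ⟨c, d, ⟨Set.mem_insert _ _, hc⟩,
          ⟨Set.mem_insert_of_mem _ hd, hdC⟩, hd.ne⟩
      omega
    apply hne
    ext y
    rw [mem_iset', mem_iset']
    simp only [Fin.tail_cons, Fin.cons_zero]
    constructor
    · rintro ⟨h1 | ⟨_, h2⟩, hcy⟩
      · exact ⟨Or.inl h1, hcy⟩
      · exact absurd hcy (hnod _ h2)
    · rintro ⟨h1 | ⟨_, h2⟩, hcy⟩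
      · exact ⟨Or.inl h1, hcy⟩
      · exact absurd hcy (hnod _ h2)
  · intro h2
    constructor
    · intro u
      obtain ⟨t, ht⟩ := hC.1 (Fin.tail u)
      exact ⟨Fin.cons (u 0) t, (cons_mem_iset' C u t).2 ht⟩
    · intro u v huv
      rw [cube_adj_succ] at huv
      rcases huv with ⟨h0, htail⟩ | ⟨h0, hadj⟩
      · obtain ⟨s, hs1, hs2⟩ : ∃ s, (cube n).Adj (Fin.tail u) s ∧ s ∈ C := by
          by_cases hcu : Fin.tail u ∈ C
          · have h3 : 1 < (iset (cube n) C (Fin.tail u)).ncard := by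
              have := h2 _ hcu; omega
            obtain ⟨a, b, ha, hb, hab⟩ := (Set.one_lt_ncard_iff (Set.toFinite _)).1 h3
            rw [mem_iset] at ha hb
            by_cases hau : a = Fin.tail u
            · rcases hb.1 with hbu | hbu
              · exact absurd (hau.trans hbu.symm) hab
              · exact ⟨b, hbu, hb.2⟩
            · rcases ha.1 with h | h
              · exact absurd h hau
              · exact ⟨a, h, ha.2⟩
          · obtain ⟨t, ht⟩ := hC.1 (Fin.tail u)
            rw [mem_iset] at ht
            rcases ht.1 with h | h
            · exact absurd (h ▸ ht.2) hcu
            · exact ⟨t, h, ht.2⟩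
        intro heq
        have hyu : Fin.cons (u 0) s ∈ iset (cube (n+1)) (Fin.tail ⁻¹' C) u := by
          rw [mem_iset']
          exact ⟨Or.inr ⟨Fin.cons_zero _ _, by rw [Fin.tail_cons]; exact hs1⟩,
            by rw [Fin.tail_cons]; exact hs2⟩
        rw [heq, mem_iset'] at hyu
        rcases hyu.1 with h | h
        · rw [Fin.tail_cons] at h
          exact hs1.ne' (h.trans htail.symm)
        · rw [Fin.cons_zero] at h
          exact h0 h.1
      · intro heq
        apply hC.2 _ _ hadj
        ext t
        rw [← cons_mem_iset' C u t, ← cons_mem_iset' C v t, ← h0, heq]
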